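/- For integers p, u ≥ 2 and real s₁, s₂ > 1, ζ(p)·ζ(u, s₂, s₁) = ∑_{i=0}^{u-1} C(p-1+i, i) ζ(p+i, u-i, s₂, s₁) + ∑_{i=0}^{p-1} C(u-1+i, i) ∑_{l,m,n,h≥1} (l+m+n+h)^{-(u+i)} l^{-(p-i)} (m+n)^{-s₂} m^{-s₁}. -/

import Mathlib

/-- The Riemann zeta value `ζ(p) = ∑_{n ≥ 1} n^{-p}`. -/
noncomputable def zeta1 (p : ℕ) : ℝ := ∑' n : ℕ, 1 / ((n : ℝ) + 1) ^ p

/-- The triple zeta function `ζ(s₁, s₂, s₃) = ∑_{m₁ > m₂ > m₃ > 0} ∏ m_j^{-s_j}`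
with real arguments. -/
noncomputable def zr3 (s₁ s₂ s₃ : ℝ) : ℝ :=
  ∑' (a : ℕ) (b : ℕ) (c : ℕ),
    ((a : ℝ) + (b : ℝ) + (c : ℝ) + 3) ^ (-s₁) *
      ((b : ℝ) + (c : ℝ) + 2) ^ (-s₂) * ((c : ℝ) + 1) ^ (-s₃)

/-- The quadruple zeta function `ζ(s₁, s₂, s₃, s₄) = ∑_{m₁ > m₂ > m₃ > m₄ > 0} ∏ m_j^{-s_j}`
with real arguments. -/
noncomputable def zr4 (s₁ s₂ s₃ s₄ : ℝ) : ℝ :=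
  ∑' (a : ℕ) (b : ℕ) (c : ℕ) (d : ℕ),
    ((a : ℝ) + (b : ℝ) + (c : ℝ) + (d : ℝ) + 4) ^ (-s₁) *
      ((b : ℝ) + (c : ℝ) + (d : ℝ) + 3) ^ (-s₂) *
      ((c : ℝ) + (d : ℝ) + 2) ^ (-s₃) * ((d : ℝ) + 1) ^ (-s₄)


open Finset

/-- auxiliary sum -/
noncomputable def TT (z w : ℝ) (p u : ℕ) : ℝ :=
  ∑ i ∈ Finset.range (u+1), (Nat.choose (p+i) i : ℝ) * (z ^ (p+1+i) * w ^ (u+1-i))⁻¹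


lemma TT_step (z w : ℝ) (hz : z ≠ 0) (hw : w ≠ 0) (p u : ℕ) :
    TT z w (p+1) (u+1)
      = z⁻¹ * TT z w (p+1) u
        + z⁻¹ * (TT z w p (u+1) - (z ^ (p+1) * w ^ (u+2))⁻¹)
        + (z ^ (p+2) * w ^ (u+2))⁻¹ := by
  have hAB : ∀ i : ℕ, (Nat.choose (p+1+(i+1)) (i+1) : ℝ)
      = (Nat.choose (p+1+i) i : ℝ) + (Nat.choose (p+(i+1)) (i+1) : ℝ) := by
    intro i
    rw [show p+1+(i+1) = (p+1+i)+1 by ring, Nat.choose_succ_succ (p+1+i) i,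
      show p+(i+1) = p+1+i by ring]
    push_cast; ring
  unfold TT
  rw [Finset.sum_range_succ'
    (fun i => (Nat.choose (p+1+i) i : ℝ) * (z ^ (p+1+1+i) * w ^ (u+1+1-i))⁻¹) (u+1)]
  rw [Finset.sum_range_succ'
    (fun i => (Nat.choose (p+i) i : ℝ) * (z ^ (p+1+i) * w ^ (u+1+1-i))⁻¹) (u+1)]
  have main : (∑ i ∈ Finset.range (u+1),
        (Nat.choose (p+1+(i+1)) (i+1) : ℝ) * (z ^ (p+1+1+(i+1)) * w ^ (u+1+1-(i+1)))⁻¹)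
      = z⁻¹ * (∑ i ∈ Finset.range (u+1),
          (Nat.choose (p+1+i) i : ℝ) * (z ^ (p+1+1+i) * w ^ (u+1-i))⁻¹)
        + z⁻¹ * (∑ i ∈ Finset.range (u+1),
          (Nat.choose (p+(i+1)) (i+1) : ℝ) * (z ^ (p+1+(i+1)) * w ^ (u+1+1-(i+1)))⁻¹) := by
    rw [Finset.mul_sum, Finset.mul_sum, ← Finset.sum_add_distrib]
    refine Finset.sum_congr rfl (fun i hi => ?_)
    rw [hAB i]
    rw [show u+1+1-(i+1) = u+1-i by omega]
    rw [show p+1+1+(i+1) = (p+1+1+i)+1 by ring, show p+1+(i+1) = p+1+1+i by ring,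
      pow_succ]
    ring
  rw [main]
  simp only [Nat.choose_zero_right, Nat.cast_one, one_mul, Nat.add_zero, add_zero,
    Nat.sub_zero, pow_zero, mul_one]
  ring

lemma edge (u : ℕ) (x y : ℝ) (hx : 0 < x) (hy : 0 < y) :
    (x ^ (0+1) * y ^ (u+1))⁻¹ = TT (x+y) y 0 u + TT (x+y) x u 0 := by
  have hxy : 0 < x + y := by linarith
  induction u with
  | zero =>
    simp only [TT, Finset.sum_range_one]
    norm_num
    field_simp
  | succ u ih =>
    have h1 : TT (x+y) y 0 (u+1)
        = (x+y)⁻¹ * TT (x+y) y 0 u + ((x+y) * y ^ (u+2))⁻¹ := by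
      unfold TT
      rw [Finset.sum_range_succ' (fun i => (Nat.choose (0+i) i : ℝ) * ((x+y) ^ (0+1+i) * y ^ (u+1+1-i))⁻¹) (u+1), Finset.mul_sum]
      congr 1
      · refine Finset.sum_congr rfl (fun i hi => ?_)
        simp only [Nat.zero_add, Nat.choose_self, Nat.cast_one, one_mul]
        have : u + 1 + 1 - (i + 1) = u + 1 - i := by omega
        rw [this]
        field_simp
        ring
      · norm_num
    have h2 : TT (x+y) x (u+1) 0 = ((x+y) ^ (u+2) * x)⁻¹ := by
      simp [TT]
    have h2' : TT (x+y) x u 0 = ((x+y) ^ (u+1) * x)⁻¹ := by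
      simp [TT]
    rw [h1, h2]
    rw [h2'] at ih
    have hT : TT (x+y) y 0 u = (x ^ (0+1) * y ^ (u+1))⁻¹ - ((x+y) ^ (u+1) * x)⁻¹ := by
      linarith [ih]
    rw [hT]
    field_simp
    ring

lemma key : ∀ (n p u : ℕ), p + u = n → ∀ x y : ℝ, 0 < x → 0 < y →
    (x ^ (p+1) * y ^ (u+1))⁻¹ = TT (x+y) y p u + TT (x+y) x u p := by
  intro n
  induction n with
  | zero =>
    intro p u hpu x y hx hy
    obtain ⟨hp, hu⟩ : p = 0 ∧ u = 0 := by omega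
    subst hp; subst hu
    exact edge 0 x y hx hy
  | succ n ih =>
    intro p u hpu x y hx hy
    have hxy : (0:ℝ) < x + y := by linarith
    rcases p with _ | p'
    · exact edge u x y hx hy
    rcases u with _ | u'
    · have h := edge (p'+1) y x hy hx
      rw [add_comm y x] at h
      rw [show x ^ (p'+1+1) * y ^ (0+1) = y ^ (0+1) * x ^ (p'+1+1) by ring, h, add_comm]
    · -- main case
      have IH1 := ih p' (u'+1) (by omega) x y hx hy
      have IH2 := ih (p'+1) u' (by omega) x y hx hy
      rw [TT_step (x+y) y (by positivity) (by positivity) p' u',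
          TT_step (x+y) x (by positivity) (by positivity) u' p']
      have e1 : TT (x+y) y p' (u'+1)
          = (x ^ (p'+1) * y ^ (u'+1+1))⁻¹ - TT (x+y) x (u'+1) p' := by linarith [IH1]
      have e2 : TT (x+y) y (p'+1) u'
          = (x ^ (p'+1+1) * y ^ (u'+1))⁻¹ - TT (x+y) x u' (p'+1) := by linarith [IH2]
      rw [e1, e2]
      have key1 : ((x+y) * (x ^ (p'+1) * y ^ (u'+2)))⁻¹ + ((x+y) * (x ^ (p'+2) * y ^ (u'+1)))⁻¹
          = (x ^ (p'+2) * y ^ (u'+2))⁻¹ := by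
        field_simp
        ring
      field_simp
      ring

lemma key' (p u : ℕ) (hp : 1 ≤ p) (hu : 1 ≤ u) (x y : ℝ) (hx : 0 < x) (hy : 0 < y) :
    x ^ (-(p:ℝ)) * y ^ (-(u:ℝ)) =
      (∑ i ∈ Finset.range u, (Nat.choose (p-1+i) i : ℝ) *
        ((x+y) ^ (-((p+i:ℕ):ℝ)) * y ^ (-((u-i:ℕ):ℝ))))
      + (∑ i ∈ Finset.range p, (Nat.choose (u-1+i) i : ℝ) *
        ((x+y) ^ (-((u+i:ℕ):ℝ)) * x ^ (-((p-i:ℕ):ℝ)))) := by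
  have hxy : (0:ℝ) < x + y := by linarith
  obtain ⟨p', rfl⟩ : ∃ p', p = p' + 1 := ⟨p - 1, by omega⟩
  obtain ⟨u', rfl⟩ : ∃ u', u = u' + 1 := ⟨u - 1, by omega⟩
  have h := key (p' + u') p' u' rfl x y hx hy
  rw [Real.rpow_neg hx.le, Real.rpow_neg hy.le, Real.rpow_natCast, Real.rpow_natCast,
    ← mul_inv, h]
  congr 1
  · refine Finset.sum_congr rfl (fun i hi => ?_)
    rw [Real.rpow_neg hxy.le, Real.rpow_neg hy.le, Real.rpow_natCast, Real.rpow_natCast,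
      ← mul_inv]
    norm_num [TT]
  · refine Finset.sum_congr rfl (fun i hi => ?_)
    rw [Real.rpow_neg hxy.le, Real.rpow_neg hx.le, Real.rpow_natCast, Real.rpow_natCast,
      ← mul_inv]
    norm_num [TT]

open ENNReal

noncomputable def f1 (s : ℝ) (n : ℕ) : ℝ≥0∞ := ENNReal.ofReal (((n:ℝ)+1) ^ (-s))

noncomputable def f3 (t₁ t₂ t₃ : ℝ) (q : ℕ × ℕ × ℕ) : ℝ≥0∞ :=
  ENNReal.ofReal (((q.1:ℝ) + (q.2.1:ℝ) + (q.2.2:ℝ) + 3) ^ (-t₁) *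
    ((q.2.1:ℝ) + (q.2.2:ℝ) + 2) ^ (-t₂) * ((q.2.2:ℝ) + 1) ^ (-t₃))

noncomputable def f4 (t₁ t₂ t₃ t₄ : ℝ) (r : ℕ × ℕ × ℕ × ℕ) : ℝ≥0∞ :=
  ENNReal.ofReal (((r.1:ℝ) + (r.2.1:ℝ) + (r.2.2.1:ℝ) + (r.2.2.2:ℝ) + 4) ^ (-t₁) *
    ((r.2.1:ℝ) + (r.2.2.1:ℝ) + (r.2.2.2:ℝ) + 3) ^ (-t₂) *
    ((r.2.2.1:ℝ) + (r.2.2.2:ℝ) + 2) ^ (-t₃) * ((r.2.2.2:ℝ) + 1) ^ (-t₄))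

noncomputable def fW (t₁ t₂ t₃ t₄ : ℝ) (r : ℕ × ℕ × ℕ × ℕ) : ℝ≥0∞ :=
  ENNReal.ofReal (((r.1:ℝ) + (r.2.1:ℝ) + (r.2.2.1:ℝ) + (r.2.2.2:ℝ) + 4) ^ (-t₁) *
    ((r.1:ℝ) + 1) ^ (-t₂) *
    ((r.2.1:ℝ) + (r.2.2.1:ℝ) + 2) ^ (-t₃) * ((r.2.1:ℝ) + 1) ^ (-t₄))

lemma summable1 {s : ℝ} (hs : 1 < s) : Summable (fun n : ℕ => ((n:ℝ)+1) ^ (-s)) := by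
  have h := Real.summable_one_div_nat_rpow.mpr hs
  have h2 := (summable_nat_add_iff 1).2 h
  refine h2.congr (fun n => ?_)
  rw [Real.rpow_neg (by positivity), one_div]
  push_cast
  ring_nf

lemma f1_tsum_eq {s : ℝ} (hs : 1 < s) :
    ∑' n, f1 s n = ENNReal.ofReal (∑' n : ℕ, ((n:ℝ)+1) ^ (-s)) :=
  (ENNReal.ofReal_tsum_of_nonneg (fun n => by positivity) (summable1 hs)).symm

lemma f1_ne_top {s : ℝ} (hs : 1 < s) : ∑' n, f1 s n ≠ ⊤ := by
  rw [f1_tsum_eq hs]; exact ENNReal.ofReal_ne_top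

lemma rpow_anti {a b : ℝ} (s : ℝ) (hs : 0 ≤ s) (ha : 0 < a) (hab : a ≤ b) :
    b ^ (-s) ≤ a ^ (-s) := by
  rw [Real.rpow_neg (by linarith), Real.rpow_neg ha.le]
  exact inv_anti₀ (Real.rpow_pos_of_pos ha s) (Real.rpow_le_rpow ha.le hab hs)

lemma f3_ne_top {t₁ t₂ t₃ : ℝ} (h₁ : 1 < t₁) (h₂ : 1 < t₂) (h₃ : 1 < t₃) :
    ∑' q, f3 t₁ t₂ t₃ q ≠ ⊤ := by
  have hb : ∀ q : ℕ × ℕ × ℕ, f3 t₁ t₂ t₃ q ≤ f1 t₁ q.1 * f1 t₂ q.2.1 * f1 t₃ q.2.2 := by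
    rintro ⟨a, b, c⟩
    unfold f3 f1
    rw [← ENNReal.ofReal_mul (by positivity), ← ENNReal.ofReal_mul (by positivity)]
    refine ENNReal.ofReal_le_ofReal ?_
    have e1 : ((a:ℝ) + b + c + 3) ^ (-t₁) ≤ ((a:ℝ)+1) ^ (-t₁) :=
      rpow_anti t₁ (by linarith) (by positivity) (by push_cast; linarith [Nat.cast_nonneg (α := ℝ) b, Nat.cast_nonneg (α := ℝ) c])
    have e2 : ((b:ℝ) + c + 2) ^ (-t₂) ≤ ((b:ℝ)+1) ^ (-t₂) :=
      rpow_anti t₂ (by linarith) (by positivity) (by linarith [Nat.cast_nonneg (α := ℝ) c])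
    have p1 : (0:ℝ) ≤ ((a:ℝ) + b + c + 3) ^ (-t₁) := by positivity
    have p2 : (0:ℝ) ≤ ((b:ℝ) + c + 2) ^ (-t₂) := by positivity
    have p3 : (0:ℝ) ≤ ((c:ℝ) + 1) ^ (-t₃) := by positivity
    have q1 : (0:ℝ) ≤ ((a:ℝ)+1) ^ (-t₁) := by positivity
    have q2 : (0:ℝ) ≤ ((b:ℝ)+1) ^ (-t₂) := by positivity
    nlinarith [mul_le_mul e1 e2 p2 q1]
  have h3 : ∀ (F G H : ℕ → ℝ≥0∞), ∑' (q : ℕ×ℕ×ℕ), F q.1 * G q.2.1 * H q.2.2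
      = (∑' n, F n) * ((∑' n, G n) * (∑' n, H n)) := by
    intro F G H
    rw [show (∑' (q : ℕ×ℕ×ℕ), F q.1 * G q.2.1 * H q.2.2)
        = ∑' (a : ℕ), ∑' (q2 : ℕ×ℕ), F a * G q2.1 * H q2.2 from ENNReal.tsum_prod (f := fun (a : ℕ) (q2 : ℕ×ℕ) => F a * G q2.1 * H q2.2)]
    calc ∑' a, ∑' (q2 : ℕ×ℕ), F a * G q2.1 * H q2.2
        = ∑' a, F a * ∑' (q2 : ℕ×ℕ), G q2.1 * H q2.2 := by
          refine tsum_congr fun a => ?_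
          rw [← ENNReal.tsum_mul_left]
          exact tsum_congr fun q2 => by ring
      _ = (∑' a, F a) * ∑' (q2 : ℕ×ℕ), G q2.1 * H q2.2 := ENNReal.tsum_mul_right
      _ = (∑' n, F n) * ((∑' n, G n) * (∑' n, H n)) := by
          congr 1
          rw [show (∑' (q2 : ℕ×ℕ), G q2.1 * H q2.2)
              = ∑' (b : ℕ), ∑' (c : ℕ), G b * H c from ENNReal.tsum_prod (f := fun (b c : ℕ) => G b * H c)]
          rw [← ENNReal.tsum_mul_right]
          exact tsum_congr fun b => ENNReal.tsum_mul_left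
  have hle := ENNReal.tsum_le_tsum hb
  rw [h3] at hle
  exact ne_top_of_le_ne_top
    (ENNReal.mul_ne_top (f1_ne_top h₁) (ENNReal.mul_ne_top (f1_ne_top h₂) (f1_ne_top h₃))) hle

lemma bridge1 {f : ℕ → ℝ} (hf : ∀ n, 0 ≤ f n) (hfin : (∑' n, ENNReal.ofReal (f n)) ≠ ⊤) :
    ∑' n, f n = (∑' n, ENNReal.ofReal (f n)).toReal := by
  rw [ENNReal.tsum_toReal_eq (fun n => ENNReal.ofReal_ne_top)]
  exact tsum_congr fun n => (ENNReal.toReal_ofReal (hf n)).symm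

lemma bridge3 {f : ℕ × ℕ × ℕ → ℝ} (hf : ∀ q, 0 ≤ f q)
    (hfin : (∑' q, ENNReal.ofReal (f q)) ≠ ⊤) :
    ∑' (a : ℕ) (b : ℕ) (c : ℕ), f (a, b, c) = (∑' q, ENNReal.ofReal (f q)).toReal := by
  have hsum : Summable f := by
    have h := ENNReal.summable_toReal hfin
    exact h.congr (fun r => ENNReal.toReal_ofReal (hf r))
  rw [ENNReal.tsum_toReal_eq (fun q => ENNReal.ofReal_ne_top)]
  rw [tsum_congr (fun q => ENNReal.toReal_ofReal (hf q))]
  rw [Summable.tsum_prod' hsum (fun a => hsum.prod_factor a)]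
  exact tsum_congr fun a => (Summable.tsum_prod' (hsum.prod_factor a)
    (fun b => (hsum.prod_factor a).prod_factor b)).symm

lemma bridge4 {f : ℕ × ℕ × ℕ × ℕ → ℝ} (hf : ∀ q, 0 ≤ f q)
    (hfin : (∑' q, ENNReal.ofReal (f q)) ≠ ⊤) :
    ∑' (a : ℕ) (b : ℕ) (c : ℕ) (d : ℕ), f (a, b, c, d)
      = (∑' q, ENNReal.ofReal (f q)).toReal := by
  have hsum : Summable f := by
    have h := ENNReal.summable_toReal hfin
    exact h.congr (fun r => ENNReal.toReal_ofReal (hf r))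
  rw [ENNReal.tsum_toReal_eq (fun q => ENNReal.ofReal_ne_top)]
  rw [tsum_congr (fun q => ENNReal.toReal_ofReal (hf q))]
  rw [Summable.tsum_prod' hsum (fun a => hsum.prod_factor a)]
  refine tsum_congr fun a => ?_
  rw [Summable.tsum_prod' (hsum.prod_factor a) (fun b => (hsum.prod_factor a).prod_factor b)]
  exact tsum_congr fun b => (Summable.tsum_prod' ((hsum.prod_factor a).prod_factor b)
    (fun c => ((hsum.prod_factor a).prod_factor b).prod_factor c)).symm

lemma key'' (p u : ℕ) (hp : 1 ≤ p) (hu : 1 ≤ u) (s₁ s₂ : ℝ) (l a b c : ℕ) :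
    f1 (p:ℝ) l * f3 (u:ℝ) s₂ s₁ (a, b, c)
      = (∑ i ∈ Finset.range u, ENNReal.ofReal (Nat.choose (p-1+i) i : ℝ) *
          f4 ((p+i:ℕ):ℝ) ((u-i:ℕ):ℝ) s₂ s₁ (l, a, b, c))
        + (∑ i ∈ Finset.range p, ENNReal.ofReal (Nat.choose (u-1+i) i : ℝ) *
          fW ((u+i:ℕ):ℝ) ((p-i:ℕ):ℝ) s₂ s₁ (l, c, b, a)) := by
  have hx : (0:ℝ) < (l:ℝ) + 1 := by positivity
  have hy : (0:ℝ) < (a:ℝ) + (b:ℝ) + (c:ℝ) + 3 := by positivity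
  have hkey := key' p u hp hu ((l:ℝ)+1) ((a:ℝ)+(b:ℝ)+(c:ℝ)+3) hx hy
  have hreal : (((l:ℝ)+1) ^ (-(p:ℝ))) *
      ((((a:ℝ)+(b:ℝ)+(c:ℝ)+3) ^ (-(u:ℝ))) * (((b:ℝ)+(c:ℝ)+2) ^ (-s₂)) * (((c:ℝ)+1) ^ (-s₁)))
      = (∑ i ∈ Finset.range u, (Nat.choose (p-1+i) i : ℝ) *
          ((((l:ℝ)+(a:ℝ)+(b:ℝ)+(c:ℝ)+4) ^ (-((p+i:ℕ):ℝ))) *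
            (((a:ℝ)+(b:ℝ)+(c:ℝ)+3) ^ (-((u-i:ℕ):ℝ))) *
            (((b:ℝ)+(c:ℝ)+2) ^ (-s₂)) * (((c:ℝ)+1) ^ (-s₁))))
        + (∑ i ∈ Finset.range p, (Nat.choose (u-1+i) i : ℝ) *
          ((((l:ℝ)+(c:ℝ)+(b:ℝ)+(a:ℝ)+4) ^ (-((u+i:ℕ):ℝ))) *
            (((l:ℝ)+1) ^ (-((p-i:ℕ):ℝ))) *
            (((c:ℝ)+(b:ℝ)+2) ^ (-s₂)) * (((c:ℝ)+1) ^ (-s₁)))) := by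
    have e1 : ((l:ℝ)+1) + ((a:ℝ)+(b:ℝ)+(c:ℝ)+3) = (l:ℝ)+(a:ℝ)+(b:ℝ)+(c:ℝ)+4 := by ring
    rw [e1] at hkey
    calc (((l:ℝ)+1) ^ (-(p:ℝ))) *
        ((((a:ℝ)+(b:ℝ)+(c:ℝ)+3) ^ (-(u:ℝ))) * (((b:ℝ)+(c:ℝ)+2) ^ (-s₂)) * (((c:ℝ)+1) ^ (-s₁)))
        = ((((l:ℝ)+1) ^ (-(p:ℝ))) * (((a:ℝ)+(b:ℝ)+(c:ℝ)+3) ^ (-(u:ℝ)))) *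
          ((((b:ℝ)+(c:ℝ)+2) ^ (-s₂)) * (((c:ℝ)+1) ^ (-s₁))) := by ring
      _ = _ := by
          rw [hkey, add_mul, Finset.sum_mul, Finset.sum_mul]
          congr 1
          · exact Finset.sum_congr rfl fun i _ => by ring
          · refine Finset.sum_congr rfl fun i _ => ?_
            rw [show (l:ℝ)+(c:ℝ)+(b:ℝ)+(a:ℝ)+4 = (l:ℝ)+(a:ℝ)+(b:ℝ)+(c:ℝ)+4 by ring,
              show (c:ℝ)+(b:ℝ)+2 = (b:ℝ)+(c:ℝ)+2 by ring]
            ring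
  have h1 : f1 (p:ℝ) l * f3 (u:ℝ) s₂ s₁ (a, b, c)
      = ENNReal.ofReal ((((l:ℝ)+1) ^ (-(p:ℝ))) *
        ((((a:ℝ)+(b:ℝ)+(c:ℝ)+3) ^ (-(u:ℝ))) * (((b:ℝ)+(c:ℝ)+2) ^ (-s₂)) * (((c:ℝ)+1) ^ (-s₁)))) := by
    unfold f1 f3
    rw [← ENNReal.ofReal_mul (by positivity)]
  rw [h1, hreal, ENNReal.ofReal_add (by positivity) (by positivity),
    ENNReal.ofReal_sum_of_nonneg (fun i _ => by positivity),
    ENNReal.ofReal_sum_of_nonneg (fun i _ => by positivity)]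
  congr 1
  · refine Finset.sum_congr rfl fun i _ => ?_
    rw [ENNReal.ofReal_mul (by positivity)]
    rfl
  · refine Finset.sum_congr rfl fun i _ => ?_
    rw [ENNReal.ofReal_mul (by positivity)]
    unfold fW
    rfl

def sw : (ℕ×ℕ×ℕ×ℕ) ≃ (ℕ×ℕ×ℕ×ℕ) where
  toFun r := (r.1, r.2.2.2, r.2.2.1, r.2.1)
  invFun r := (r.1, r.2.2.2, r.2.2.1, r.2.1)
  left_inv := fun ⟨l,a,b,c⟩ => rfl
  right_inv := fun ⟨l,a,b,c⟩ => rfl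

lemma master (p u : ℕ) (hp : 1 ≤ p) (hu : 1 ≤ u) (s₁ s₂ : ℝ) :
    (∑' n, f1 (p:ℝ) n) * (∑' q : ℕ×ℕ×ℕ, f3 (u:ℝ) s₂ s₁ q)
      = (∑ i ∈ Finset.range u, ENNReal.ofReal (Nat.choose (p-1+i) i : ℝ) *
          ∑' r : ℕ×ℕ×ℕ×ℕ, f4 ((p+i:ℕ):ℝ) ((u-i:ℕ):ℝ) s₂ s₁ r)
        + (∑ i ∈ Finset.range p, ENNReal.ofReal (Nat.choose (u-1+i) i : ℝ) *
          ∑' r : ℕ×ℕ×ℕ×ℕ, fW ((u+i:ℕ):ℝ) ((p-i:ℕ):ℝ) s₂ s₁ r) := by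
  calc (∑' n, f1 (p:ℝ) n) * (∑' q : ℕ×ℕ×ℕ, f3 (u:ℝ) s₂ s₁ q)
      = ∑' n, f1 (p:ℝ) n * ∑' q : ℕ×ℕ×ℕ, f3 (u:ℝ) s₂ s₁ q := ENNReal.tsum_mul_right.symm
    _ = ∑' (n:ℕ), ∑' (q:ℕ×ℕ×ℕ), f1 (p:ℝ) n * f3 (u:ℝ) s₂ s₁ q :=
        tsum_congr fun n => ENNReal.tsum_mul_left.symm
    _ = ∑' (r : ℕ×ℕ×ℕ×ℕ), f1 (p:ℝ) r.1 * f3 (u:ℝ) s₂ s₁ r.2 :=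
        (ENNReal.tsum_prod (f := fun (n:ℕ) (q:ℕ×ℕ×ℕ) => f1 (p:ℝ) n * f3 (u:ℝ) s₂ s₁ q)).symm
    _ = ∑' (r : ℕ×ℕ×ℕ×ℕ),
          ((∑ i ∈ Finset.range u, ENNReal.ofReal (Nat.choose (p-1+i) i : ℝ) *
            f4 ((p+i:ℕ):ℝ) ((u-i:ℕ):ℝ) s₂ s₁ r)
          + (∑ i ∈ Finset.range p, ENNReal.ofReal (Nat.choose (u-1+i) i : ℝ) *
            fW ((u+i:ℕ):ℝ) ((p-i:ℕ):ℝ) s₂ s₁ (sw r))) := by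
        refine tsum_congr fun r => ?_
        obtain ⟨l, a, b, c⟩ := r
        exact key'' p u hp hu s₁ s₂ l a b c
    _ = (∑' (r : ℕ×ℕ×ℕ×ℕ), ∑ i ∈ Finset.range u, ENNReal.ofReal (Nat.choose (p-1+i) i : ℝ) *
            f4 ((p+i:ℕ):ℝ) ((u-i:ℕ):ℝ) s₂ s₁ r)
        + ∑' (r : ℕ×ℕ×ℕ×ℕ), ∑ i ∈ Finset.range p, ENNReal.ofReal (Nat.choose (u-1+i) i : ℝ) *
            fW ((u+i:ℕ):ℝ) ((p-i:ℕ):ℝ) s₂ s₁ (sw r) := ENNReal.tsum_add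
    _ = (∑ i ∈ Finset.range u, ∑' (r : ℕ×ℕ×ℕ×ℕ), ENNReal.ofReal (Nat.choose (p-1+i) i : ℝ) *
            f4 ((p+i:ℕ):ℝ) ((u-i:ℕ):ℝ) s₂ s₁ r)
        + ∑ i ∈ Finset.range p, ∑' (r : ℕ×ℕ×ℕ×ℕ), ENNReal.ofReal (Nat.choose (u-1+i) i : ℝ) *
            fW ((u+i:ℕ):ℝ) ((p-i:ℕ):ℝ) s₂ s₁ (sw r) := by
        rw [Summable.tsum_finsetSum (fun i _ => ENNReal.summable), Summable.tsum_finsetSum (fun i _ => ENNReal.summable)]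
    _ = _ := by
        congr 1
        · exact Finset.sum_congr rfl fun i _ => ENNReal.tsum_mul_left
        · refine Finset.sum_congr rfl fun i _ => ?_
          rw [ENNReal.tsum_mul_left]
          congr 1
          exact sw.tsum_eq (fW ((u+i:ℕ):ℝ) ((p-i:ℕ):ℝ) s₂ s₁)



theorem shuffle_A4_lemma (p u : ℕ) (hp : 2 ≤ p) (hu : 2 ≤ u)
    (s₁ s₂ : ℝ) (hs₁ : 1 < s₁) (hs₂ : 1 < s₂) :
    zeta1 p * zr3 (u : ℝ) s₂ s₁ =
      (∑ i ∈ Finset.range u, (Nat.choose (p - 1 + i) i : ℝ) *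
        zr4 ((p + i : ℕ) : ℝ) ((u - i : ℕ) : ℝ) s₂ s₁) +
      (∑ i ∈ Finset.range p, (Nat.choose (u - 1 + i) i : ℝ) *
        ∑' (l : ℕ) (m : ℕ) (n : ℕ) (h : ℕ),
          ((l : ℝ) + (m : ℝ) + (n : ℝ) + (h : ℝ) + 4) ^ (-((u + i : ℕ) : ℝ)) *
            ((l : ℝ) + 1) ^ (-((p - i : ℕ) : ℝ)) *
            ((m : ℝ) + (n : ℝ) + 2) ^ (-s₂) * ((m : ℝ) + 1) ^ (-s₁)) := by
  have hp1 : (1:ℝ) < (p:ℝ) := by exact_mod_cast Nat.lt_of_lt_of_le Nat.one_lt_two hp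
  have hu1 : (1:ℝ) < (u:ℝ) := by exact_mod_cast Nat.lt_of_lt_of_le Nat.one_lt_two hu
  have hf1 : (∑' n, f1 (p:ℝ) n) ≠ ⊤ := f1_ne_top hp1
  have hf3 : (∑' q : ℕ×ℕ×ℕ, f3 (u:ℝ) s₂ s₁ q) ≠ ⊤ := f3_ne_top hu1 hs₂ hs₁
  have hM := master p u (by omega) (by omega) s₁ s₂
  have htot : (∑' n, f1 (p:ℝ) n) * (∑' q : ℕ×ℕ×ℕ, f3 (u:ℝ) s₂ s₁ q) ≠ ⊤ :=
    ENNReal.mul_ne_top hf1 hf3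
  set A : ℕ → ℝ≥0∞ := fun i => ENNReal.ofReal (Nat.choose (p-1+i) i : ℝ) *
    ∑' r : ℕ×ℕ×ℕ×ℕ, f4 ((p+i:ℕ):ℝ) ((u-i:ℕ):ℝ) s₂ s₁ r with hA
  set B : ℕ → ℝ≥0∞ := fun i => ENNReal.ofReal (Nat.choose (u-1+i) i : ℝ) *
    ∑' r : ℕ×ℕ×ℕ×ℕ, fW ((u+i:ℕ):ℝ) ((p-i:ℕ):ℝ) s₂ s₁ r with hB
  have hsum_ne : (∑ i ∈ Finset.range u, A i) + (∑ i ∈ Finset.range p, B i) ≠ ⊤ :=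
    hM ▸ htot
  have hSA : (∑ i ∈ Finset.range u, A i) ≠ ⊤ := by
    intro h; exact hsum_ne (by simp [h])
  have hSB : (∑ i ∈ Finset.range p, B i) ≠ ⊤ := by
    intro h; exact hsum_ne (by simp [h])
  have hAi : ∀ i ∈ Finset.range u, A i ≠ ⊤ :=
    fun i hi => ne_top_of_le_ne_top hSA (Finset.single_le_sum (fun _ _ => zero_le) hi)
  have hBi : ∀ i ∈ Finset.range p, B i ≠ ⊤ :=
    fun i hi => ne_top_of_le_ne_top hSB (Finset.single_le_sum (fun _ _ => zero_le) hi)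
  have hq4 : ∀ i ∈ Finset.range u,
      (∑' r : ℕ×ℕ×ℕ×ℕ, f4 ((p+i:ℕ):ℝ) ((u-i:ℕ):ℝ) s₂ s₁ r) ≠ ⊤ := by
    intro i hi hT
    refine hAi i hi ?_
    rw [hA]
    simp only []
    rw [hT, ENNReal.mul_top]
    exact (ENNReal.ofReal_pos.mpr (by exact_mod_cast Nat.choose_pos (Nat.le_add_left i (p-1)))).ne'
  have hqW : ∀ i ∈ Finset.range p,
      (∑' r : ℕ×ℕ×ℕ×ℕ, fW ((u+i:ℕ):ℝ) ((p-i:ℕ):ℝ) s₂ s₁ r) ≠ ⊤ := by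
    intro i hi hT
    refine hBi i hi ?_
    rw [hB]
    simp only []
    rw [hT, ENNReal.mul_top]
    exact (ENNReal.ofReal_pos.mpr (by exact_mod_cast Nat.choose_pos (Nat.le_add_left i (u-1)))).ne'
  have hz1 : zeta1 p = (∑' n, f1 (p:ℝ) n).toReal := by
    have e : zeta1 p = ∑' n : ℕ, ((n:ℝ)+1) ^ (-(p:ℝ)) := by
      unfold zeta1
      refine tsum_congr fun n => ?_
      rw [Real.rpow_neg (by positivity), Real.rpow_natCast, one_div]
    rw [e]
    exact bridge1 (fun n => by positivity) hf1
  have hz3 : zr3 (u:ℝ) s₂ s₁ = (∑' q : ℕ×ℕ×ℕ, f3 (u:ℝ) s₂ s₁ q).toReal := by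
    unfold zr3
    exact bridge3 (f := fun q => ((q.1:ℝ) + (q.2.1:ℝ) + (q.2.2:ℝ) + 3) ^ (-(u:ℝ)) *
      ((q.2.1:ℝ) + (q.2.2:ℝ) + 2) ^ (-s₂) * ((q.2.2:ℝ) + 1) ^ (-s₁))
      (fun q => by positivity) hf3
  have hz4 : ∀ i ∈ Finset.range u, zr4 ((p+i:ℕ):ℝ) ((u-i:ℕ):ℝ) s₂ s₁
      = (∑' r : ℕ×ℕ×ℕ×ℕ, f4 ((p+i:ℕ):ℝ) ((u-i:ℕ):ℝ) s₂ s₁ r).toReal := by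
    intro i hi
    unfold zr4
    exact bridge4 (f := fun r => ((r.1:ℝ) + (r.2.1:ℝ) + (r.2.2.1:ℝ) + (r.2.2.2:ℝ) + 4) ^ (-((p+i:ℕ):ℝ)) *
      ((r.2.1:ℝ) + (r.2.2.1:ℝ) + (r.2.2.2:ℝ) + 3) ^ (-((u-i:ℕ):ℝ)) *
      ((r.2.2.1:ℝ) + (r.2.2.2:ℝ) + 2) ^ (-s₂) * ((r.2.2.2:ℝ) + 1) ^ (-s₁))
      (fun r => by positivity) (hq4 i hi)
  have hzW : ∀ i ∈ Finset.range p,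
      (∑' (l : ℕ) (m : ℕ) (n : ℕ) (h : ℕ),
          ((l : ℝ) + (m : ℝ) + (n : ℝ) + (h : ℝ) + 4) ^ (-((u + i : ℕ) : ℝ)) *
            ((l : ℝ) + 1) ^ (-((p - i : ℕ) : ℝ)) *
            ((m : ℝ) + (n : ℝ) + 2) ^ (-s₂) * ((m : ℝ) + 1) ^ (-s₁))
      = (∑' r : ℕ×ℕ×ℕ×ℕ, fW ((u+i:ℕ):ℝ) ((p-i:ℕ):ℝ) s₂ s₁ r).toReal := by
    intro i hi
    exact bridge4 (f := fun r => ((r.1:ℝ) + (r.2.1:ℝ) + (r.2.2.1:ℝ) + (r.2.2.2:ℝ) + 4) ^ (-((u+i:ℕ):ℝ)) *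
      ((r.1:ℝ) + 1) ^ (-((p-i:ℕ):ℝ)) *
      ((r.2.1:ℝ) + (r.2.2.1:ℝ) + 2) ^ (-s₂) * ((r.2.1:ℝ) + 1) ^ (-s₁))
      (fun r => by positivity) (hqW i hi)
  calc zeta1 p * zr3 (u:ℝ) s₂ s₁
      = ((∑' n, f1 (p:ℝ) n) * (∑' q : ℕ×ℕ×ℕ, f3 (u:ℝ) s₂ s₁ q)).toReal := by
        rw [ENNReal.toReal_mul, hz1, hz3]
    _ = ((∑ i ∈ Finset.range u, A i) + (∑ i ∈ Finset.range p, B i)).toReal := by rw [hM]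
    _ = (∑ i ∈ Finset.range u, (A i).toReal) + (∑ i ∈ Finset.range p, (B i).toReal) := by
        rw [ENNReal.toReal_add hSA hSB, ENNReal.toReal_sum hAi, ENNReal.toReal_sum hBi]
    _ = _ := by
        congr 1
        · refine Finset.sum_congr rfl fun i hi => ?_
          rw [hA]
          simp only []
          rw [ENNReal.toReal_mul, ENNReal.toReal_ofReal (by positivity), hz4 i hi]
        · refine Finset.sum_congr rfl fun i hi => ?_
          rw [hB]
          simp only []
          rw [ENNReal.toReal_mul, ENNReal.toReal_ofReal (by positivity), hzW i hi]
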